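/- Let m ≥ 2 be an integer and c > 0. Let r : [0,π] × ℝ → ℝ be continuous, continuously differentiable in its second variable, 2π-periodic in its second variable, satisfying r(ϕ,−η) = r(ϕ,η) and r(ϕ, η + 2π/m) = r(ϕ,η) for all ϕ, η, and r(ϕ,η) ≥ c·sin ϕ for all ϕ ∈ [0,π], η ∈ ℝ. Then for every z ∈ ℝ: ∫₀^π ∫₀^{2π} sin ϕ · ∂_η(r(ϕ,η)·cos η) / (r(ϕ,η)² + (z − cos ϕ)²)^{1/2} dη dϕ = 0 and ∫₀^π ∫₀^{2π} sin ϕ · ∂_η(r(ϕ,η)·sin η) / (r(ϕ,η)² + (z − cos ϕ)²)^{1/2} dη dϕ = 0. -/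

import Mathlib

open Real Set MeasureTheory intervalIntegral

/-- Let `m ≥ 2` and `c > 0`. Let `r : [0,π] × ℝ → ℝ` be continuous, continuously
differentiable in its second variable (with derivative `r'`), `2π`-periodic and even in the
second variable, invariant under `η ↦ η + 2π/m`, and with `r(ϕ,η) ≥ c sin ϕ`. Then for every
`z ∈ ℝ` the two double integrals
`∫₀^π ∫₀^{2π} sin ϕ ∂_η(r cos η)/(r² + (z − cos ϕ)²)^{1/2}` and
`∫₀^π ∫₀^{2π} sin ϕ ∂_η(r sin η)/(r² + (z − cos ϕ)²)^{1/2}` vanish. -/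
-- derivative of a shift-invariant function is shift-invariant
lemma deriv_shift_inv (R R' : ℝ → ℝ) (hd : ∀ η, HasDerivAt R (R' η) η)
    (t : ℝ) (hshift : ∀ η, R (η + t) = R η) (η : ℝ) : R' (η + t) = R' η := by
  have h1 : HasDerivAt (fun x : ℝ => R (x + t)) (R' (η + t)) η := by
    simpa [Function.comp_def] using HasDerivAt.comp η (hd (η + t)) ((hasDerivAt_id η).add_const t)
  have h2 : (fun x : ℝ => R (x + t)) = R := funext hshift
  rw [h2] at h1
  exact h1.unique (hd η)

lemma deriv_even (R R' : ℝ → ℝ) (hd : ∀ η, HasDerivAt R (R' η) η)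
    (heven : ∀ η, R (-η) = R η) (η : ℝ) : R' (-η) = - R' η := by
  have h1 : HasDerivAt (fun x : ℝ => R (-x)) (-R' (-η)) η := by
    simpa [Function.comp_def] using HasDerivAt.comp η (hd (-η)) (hasDerivAt_neg η)
  have h2 : (fun x : ℝ => R (-x)) = R := funext heven
  rw [h2] at h1
  have := h1.unique (hd η)
  linarith

lemma inner13 (m : ℕ) (hm : 2 ≤ m) (R R' : ℝ → ℝ)
    (hd : ∀ η, HasDerivAt R (R' η) η)
    (hR' : Continuous R')
    (hper : ∀ η, R (η + 2 * π) = R η)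
    (heven : ∀ η, R (-η) = R η)
    (hfold : ∀ η, R (η + 2 * π / m) = R η)
    (hpos : ∀ η, 0 < R η) (s a : ℝ) :
    (∫ η in (0:ℝ)..(2 * π),
        s * (R' η * Real.cos η - R η * Real.sin η) / Real.sqrt (R η ^ 2 + a ^ 2)) = 0 ∧
    (∫ η in (0:ℝ)..(2 * π),
        s * (R' η * Real.sin η + R η * Real.cos η) / Real.sqrt (R η ^ 2 + a ^ 2)) = 0 := by
  have hRc : Continuous R := by
    rw [continuous_iff_continuousAt]; exact fun x => (hd x).continuousAt
  have hden : ∀ η, Real.sqrt (R η ^ 2 + a ^ 2) ≠ 0 := by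
    intro η
    have h : 0 < R η ^ 2 + a ^ 2 := by nlinarith [hpos η, sq_nonneg a]
    exact (Real.sqrt_pos.mpr h).ne'
  set f1 : ℝ → ℝ := fun η => s * (R' η * Real.cos η - R η * Real.sin η) /
      Real.sqrt (R η ^ 2 + a ^ 2) with hf1
  set f2 : ℝ → ℝ := fun η => s * (R' η * Real.sin η + R η * Real.cos η) /
      Real.sqrt (R η ^ 2 + a ^ 2) with hf2
  have hcont1 : Continuous f1 := by
    apply Continuous.div
    · fun_prop
    · fun_prop
    · exact hden
  have hcont2 : Continuous f2 := by
    apply Continuous.div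
    · fun_prop
    · fun_prop
    · exact hden
  have hR'per : ∀ η, R' (η + 2 * π) = R' η := deriv_shift_inv R R' hd _ hper
  have hR'odd : ∀ η, R' (-η) = - R' η := deriv_even R R' hd heven
  set α : ℝ := 2 * π / m with hα
  have hR'fold : ∀ η, R' (η + α) = R' η := deriv_shift_inv R R' hd _ hfold
  have hf1per : Function.Periodic f1 (2 * π) := by
    intro η; simp only [hf1, hper, hR'per, Real.cos_add_two_pi, Real.sin_add_two_pi]
  have hf2per : Function.Periodic f2 (2 * π) := by
    intro η; simp only [hf2, hper, hR'per, Real.cos_add_two_pi, Real.sin_add_two_pi]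
  have hf1odd : ∀ η, f1 (-η) = - f1 η := by
    intro η
    simp only [hf1, heven, hR'odd, Real.cos_neg, Real.sin_neg]
    ring
  -- J1 = 0
  have hJ1 : (∫ η in (0:ℝ)..(2 * π), f1 η) = 0 := by
    have h0 : (∫ η in (0:ℝ)..(2 * π), f1 η) = ∫ η in (-π)..(-π + 2 * π), f1 η := by
      have := hf1per.intervalIntegral_add_eq (0 : ℝ) (-π)
      simpa using this
    have h1 : (-π + 2 * π : ℝ) = π := by ring
    rw [h0, h1]
    have hsplit : (∫ η in (-π)..(π:ℝ), f1 η) =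
        (∫ η in (-π)..(0:ℝ), f1 η) + ∫ η in (0:ℝ)..π, f1 η := by
      rw [intervalIntegral.integral_add_adjacent_intervals]
      · exact hcont1.intervalIntegrable _ _
      · exact hcont1.intervalIntegrable _ _
    have hneg : (∫ η in (-π)..(0:ℝ), f1 η) = - ∫ η in (0:ℝ)..π, f1 η := by
      have := intervalIntegral.integral_comp_neg (a := (0:ℝ)) (b := π) (f := f1)
      rw [neg_zero] at this
      rw [← this]
      simp only [hf1odd]
      rw [intervalIntegral.integral_neg]
    rw [hsplit, hneg]; ring
  -- shift identity for f2
  have hαpos : 0 < α := by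
    have : (0:ℝ) < m := by positivity
    positivity
  have hαle : α ≤ π := by
    rw [hα, div_le_iff₀ (by positivity : (0:ℝ) < m)]
    have hm' : (2:ℝ) ≤ m := by exact_mod_cast hm
    nlinarith [Real.pi_pos]
  have hcoslt : Real.cos α ≠ 1 := by
    intro h
    have := (Real.cos_eq_one_iff_of_lt_of_lt (by linarith [Real.pi_pos] : -(2*π) < α)
      (by linarith [Real.pi_pos] : α < 2*π)).1 h
    linarith
  have hshift2 : ∀ η, f2 (η + α) = Real.sin α * f1 η + Real.cos α * f2 η := by
    intro η
    simp only [hf1, hf2, hfold, hR'fold, Real.sin_add, Real.cos_add]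
    field_simp
    ring
  have hJ2 : (∫ η in (0:ℝ)..(2 * π), f2 η) = 0 := by
    have h0 : (∫ η in (0:ℝ)..(2 * π), f2 (η + α)) = ∫ η in (0:ℝ)..(2 * π), f2 η := by
      rw [intervalIntegral.integral_comp_add_right]
      have := hf2per.intervalIntegral_add_eq α 0
      simpa [add_comm] using this
    have h1 : (∫ η in (0:ℝ)..(2 * π), f2 (η + α)) =
        Real.sin α * (∫ η in (0:ℝ)..(2 * π), f1 η) +
        Real.cos α * (∫ η in (0:ℝ)..(2 * π), f2 η) := by
      rw [← intervalIntegral.integral_const_mul, ← intervalIntegral.integral_const_mul,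
        ← intervalIntegral.integral_add ((hcont1.intervalIntegrable _ _).const_mul _)
          ((hcont2.intervalIntegrable _ _).const_mul _)]
      exact intervalIntegral.integral_congr fun η _ => hshift2 η
    rw [h1, hJ1, mul_zero, zero_add] at h0
    have : (Real.cos α - 1) * (∫ η in (0:ℝ)..(2 * π), f2 η) = 0 := by linarith
    rcases mul_eq_zero.1 this with h | h
    · exact absurd (by linarith : Real.cos α = 1) hcoslt
    · exact h
  exact ⟨hJ1, hJ2⟩

theorem stmt13 (m : ℕ) (hm : 2 ≤ m) (c : ℝ) (hc : 0 < c)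
    (r r' : ℝ → ℝ → ℝ)
    (hr_cont : ContinuousOn (fun p : ℝ × ℝ => r p.1 p.2) (Set.Icc 0 π ×ˢ Set.univ))
    (hderiv : ∀ ϕ ∈ Set.Icc (0:ℝ) π, ∀ η : ℝ, HasDerivAt (r ϕ) (r' ϕ η) η)
    (hr'_cont : ContinuousOn (fun p : ℝ × ℝ => r' p.1 p.2) (Set.Icc 0 π ×ˢ Set.univ))
    (hper : ∀ ϕ ∈ Set.Icc (0:ℝ) π, ∀ η : ℝ, r ϕ (η + 2 * π) = r ϕ η)
    (heven : ∀ ϕ ∈ Set.Icc (0:ℝ) π, ∀ η : ℝ, r ϕ (-η) = r ϕ η)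
    (hfold : ∀ ϕ ∈ Set.Icc (0:ℝ) π, ∀ η : ℝ, r ϕ (η + 2 * π / m) = r ϕ η)
    (hlow : ∀ ϕ ∈ Set.Icc (0:ℝ) π, ∀ η : ℝ, c * Real.sin ϕ ≤ r ϕ η) :
    ∀ z : ℝ,
      (∫ ϕ in (0:ℝ)..π, ∫ η in (0:ℝ)..(2 * π),
          Real.sin ϕ * (r' ϕ η * Real.cos η - r ϕ η * Real.sin η) /
            Real.sqrt (r ϕ η ^ 2 + (z - Real.cos ϕ) ^ 2)) = 0 ∧
      (∫ ϕ in (0:ℝ)..π, ∫ η in (0:ℝ)..(2 * π),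
          Real.sin ϕ * (r' ϕ η * Real.sin η + r ϕ η * Real.cos η) /
            Real.sqrt (r ϕ η ^ 2 + (z - Real.cos ϕ) ^ 2)) = 0 := by
  intro z
  have hpi : (0:ℝ) ≤ π := Real.pi_pos.le
  have key : ∀ ϕ ∈ Set.Icc (0:ℝ) π,
      (∫ η in (0:ℝ)..(2 * π),
          Real.sin ϕ * (r' ϕ η * Real.cos η - r ϕ η * Real.sin η) /
            Real.sqrt (r ϕ η ^ 2 + (z - Real.cos ϕ) ^ 2)) = 0 ∧
      (∫ η in (0:ℝ)..(2 * π),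
          Real.sin ϕ * (r' ϕ η * Real.sin η + r ϕ η * Real.cos η) /
            Real.sqrt (r ϕ η ^ 2 + (z - Real.cos ϕ) ^ 2)) = 0 := by
    intro ϕ hϕ
    by_cases hs : Real.sin ϕ = 0
    · constructor <;> simp [hs]
    · have hsin : 0 < Real.sin ϕ :=
        lt_of_le_of_ne (Real.sin_nonneg_of_nonneg_of_le_pi hϕ.1 hϕ.2) (Ne.symm hs)
      have hR'c : Continuous (r' ϕ) := by
        have h1 : ContinuousOn (fun η : ℝ => r' ϕ η) Set.univ := by
          have := ContinuousOn.comp (g := fun p : ℝ × ℝ => r' p.1 p.2)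
            hr'_cont ((continuous_const.prodMk continuous_id).continuousOn
              (s := (Set.univ : Set ℝ)))
            (fun x _ => Set.mem_prod.2 ⟨hϕ, trivial⟩)
          exact this
        rw [← continuousOn_univ]
        exact h1
      exact inner13 m hm (r ϕ) (r' ϕ) (hderiv ϕ hϕ) hR'c (hper ϕ hϕ) (heven ϕ hϕ)
        (hfold ϕ hϕ) (fun η => lt_of_lt_of_le (mul_pos hc hsin) (hlow ϕ hϕ η))
        (Real.sin ϕ) (z - Real.cos ϕ)
  constructor
  · have : (∫ ϕ in (0:ℝ)..π, ∫ η in (0:ℝ)..(2 * π),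
        Real.sin ϕ * (r' ϕ η * Real.cos η - r ϕ η * Real.sin η) /
          Real.sqrt (r ϕ η ^ 2 + (z - Real.cos ϕ) ^ 2)) = ∫ ϕ in (0:ℝ)..π, (0:ℝ) := by
      apply intervalIntegral.integral_congr
      intro ϕ hϕ
      rw [Set.uIcc_of_le hpi] at hϕ
      exact (key ϕ hϕ).1
    simpa using this
  · have : (∫ ϕ in (0:ℝ)..π, ∫ η in (0:ℝ)..(2 * π),
        Real.sin ϕ * (r' ϕ η * Real.sin η + r ϕ η * Real.cos η) /
          Real.sqrt (r ϕ η ^ 2 + (z - Real.cos ϕ) ^ 2)) = ∫ ϕ in (0:ℝ)..π, (0:ℝ) := by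
      apply intervalIntegral.integral_congr
      intro ϕ hϕ
      rw [Set.uIcc_of_le hpi] at hϕ
      exact (key ϕ hϕ).2
    simpa using this
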